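/- Let z be drawn from the erasure distribution at rate p ∈ [0,1] on {-1,0,1}^5, let F be the multilinear extension of f(x) = sgn(x_1 - 3x_2 + x_3 - x_4 + 3x_5), and set M = (1/2)(z_1 + z_3 - z_4 + z_1 z_3 z_4). Then E|F(z)| = ((1 - 2p + 2p²)/2)·E|M| + p - p²/2. -/

import Mathlib

open Finset

noncomputable section

/-- Sign function: `1` for positive arguments, `-1` otherwise. -/
def sgn (t : ℝ) : ℝ := if 0 < t then 1 else -1

/-- Real value of a Boolean sign: `true ↦ 1`, `false ↦ -1`. -/
def val (b : Bool) : ℝ := if b then 1 else -1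

/-- Fourier coefficient `f̂(S) = 2^{-n} ∑_{x ∈ {-1,1}^n} f(x) ∏_{i∈S} x_i`. -/
def fCoeff (n : ℕ) (f : (Fin n → ℝ) → ℝ) (S : Finset (Fin n)) : ℝ :=
  (2 ^ n : ℝ)⁻¹ * ∑ b : Fin n → Bool, f (fun i => val (b i)) * ∏ i ∈ S, val (b i)

/-- Multilinear extension `F(z) = ∑_S f̂(S) ∏_{i∈S} z_i`. -/
def mlin (n : ℕ) (f : (Fin n → ℝ) → ℝ) (z : Fin n → ℝ) : ℝ :=
  ∑ S : Finset (Fin n), fCoeff n f S * ∏ i ∈ S, z i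

/-- Value of an erasure symbol: `0 ↦ 0`, `1 ↦ 1`, `2 ↦ -1`. -/
def eval3 (k : Fin 3) : ℝ := if k = 0 then 0 else if k = 1 then 1 else -1

/-- Erasure weight: `Pr[z_i = 0] = 1 - p`, `Pr[z_i = 1] = Pr[z_i = -1] = p/2`. -/
def wt (p : ℝ) (k : Fin 3) : ℝ := if k = 0 then 1 - p else p / 2

/-- `Φ_p(f) = E_z |F(z)|` under the erasure distribution at rate `p`. -/
def Phi (n : ℕ) (p : ℝ) (f : (Fin n → ℝ) → ℝ) : ℝ :=
  ∑ e : Fin n → Fin 3, (∏ i, wt p (e i)) * |mlin n f (fun i => eval3 (e i))|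

/-- `f(x) = sgn(x₁ - 3x₂ + x₃ - x₄ + 3x₅)`. -/
def f5 (x : Fin 5 → ℝ) : ℝ := sgn (x 0 - 3 * x 1 + x 2 - x 3 + 3 * x 4)

/-- `Maj₅(x) = sgn(x₁ + x₂ + x₃ + x₄ + x₅)`. -/
def maj5 (x : Fin 5 → ℝ) : ℝ := sgn (x 0 + x 1 + x 2 + x 3 + x 4)

set_option maxHeartbeats 1000000

theorem mlin_eq (n : ℕ) (f : (Fin n → ℝ) → ℝ) (z : Fin n → ℝ) :
    mlin n f z = (2 ^ n : ℝ)⁻¹ *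
      ∑ b : Fin n → Bool, f (fun i => val (b i)) * ∏ i, (val (b i) * z i + 1) := by
  unfold mlin fCoeff
  simp only [Finset.mul_sum, Finset.sum_mul]
  rw [Finset.sum_comm]
  refine Finset.sum_congr rfl fun b _ => ?_
  rw [Finset.prod_add, Finset.powerset_univ, Finset.mul_sum, Finset.mul_sum]
  refine Finset.sum_congr rfl fun S _ => ?_
  rw [Finset.prod_mul_distrib]
  simp
  ring

/-- Equivalence between quintuples and 5-tuples, in the order (0,2,3,1,4). -/
def equiv5 {α : Type*} : (α × α × α × α × α) ≃ (Fin 5 → α) where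
  toFun x := ![x.1, x.2.2.2.1, x.2.1, x.2.2.1, x.2.2.2.2]
  invFun f := (f 0, f 2, f 3, f 1, f 4)
  left_inv x := rfl
  right_inv f := by funext i; fin_cases i <;> rfl

theorem sum5 {α : Type*} [Fintype α] (g : (Fin 5 → α) → ℝ) :
    ∑ x : Fin 5 → α, g x
      = ∑ a : α, ∑ b : α, ∑ c : α, ∑ d : α, ∑ e : α, g ![a,d,b,c,e] := by
  rw [← Fintype.sum_equiv (equiv5 (α := α)) (fun y => g (equiv5 y)) g (fun x => rfl)]
  simp [Fintype.sum_prod_type, equiv5]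
  rfl

theorem F_formula (z : Fin 5 → ℝ) :
    mlin 5 f5 z = (z 4 - z 1)/2
      + (1 + z 1 * z 4) * (z 0 + z 2 - z 3 + z 0 * z 2 * z 3)/4 := by
  rw [mlin_eq]
  rw [show (∑ b : Fin 5 → Bool, f5 (fun i => val (b i)) * ∏ i, (val (b i) * z i + 1))
      = ∑ a : Bool, ∑ b : Bool, ∑ c : Bool, ∑ d : Bool, ∑ e : Bool,
          f5 (fun i => val (![a,d,b,c,e] i)) * ∏ i, (val (![a,d,b,c,e] i) * z i + 1)
    from sum5 _]
  simp only [Fintype.sum_bool, f5, Fin.prod_univ_five, Matrix.cons_val_zero,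
    Matrix.cons_val_one, Matrix.head_cons, Matrix.cons_val_two, Matrix.tail_cons,
    Matrix.cons_val_three, Matrix.cons_val_four, Function.comp,
    _root_.val]
  norm_num [sgn]
  ring

theorem eval3_zero : eval3 0 = 0 := rfl
theorem eval3_one : eval3 1 = 1 := rfl
theorem eval3_two : eval3 2 = -1 := rfl
theorem wt_zero (p : ℝ) : wt p 0 = 1 - p := rfl
theorem wt_one (p : ℝ) : wt p 1 = p / 2 := rfl
theorem wt_two (p : ℝ) : wt p 2 = p / 2 := rfl

theorem eval3_cases (k : Fin 3) : eval3 k = 0 ∨ eval3 k = 1 ∨ eval3 k = -1 := by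
  unfold eval3; split_ifs <;> simp

theorem hA (u v w : Fin 3) :
    eval3 u + eval3 v - eval3 w + eval3 u * eval3 v * eval3 w = -2 ∨
    eval3 u + eval3 v - eval3 w + eval3 u * eval3 v * eval3 w = -1 ∨
    eval3 u + eval3 v - eval3 w + eval3 u * eval3 v * eval3 w = 0 ∨
    eval3 u + eval3 v - eval3 w + eval3 u * eval3 v * eval3 w = 1 ∨
    eval3 u + eval3 v - eval3 w + eval3 u * eval3 v * eval3 w = 2 := by
  rcases eval3_cases u with h|h|h <;> rcases eval3_cases v with h'|h'|h' <;>
    rcases eval3_cases w with h''|h''|h'' <;> rw [h, h', h''] <;> norm_num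

theorem phiInnerSum (p x : ℝ)
    (hx : x = -2 ∨ x = -1 ∨ x = 0 ∨ x = 1 ∨ x = 2) :
    (∑ s : Fin 3, ∑ t : Fin 3, (wt p s * wt p t) *
        |(eval3 t - eval3 s)/2 + (1 + eval3 s * eval3 t) * x/4|)
      = ((1 - 2*p + 2*p^2) / 2) * |(1/2 : ℝ) * x| + (p - p^2/2) := by
  rcases hx with h|h|h|h|h <;> subst h <;>
    simp only [Fin.sum_univ_three, eval3_zero, eval3_one, eval3_two,
      wt_zero, wt_one, wt_two] <;>
    norm_num [abs] <;> ring

theorem stmt14 (p : ℝ) (hp : p ∈ Set.Icc (0 : ℝ) 1) :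
    Phi 5 p f5
      = ((1 - 2*p + 2*p^2) / 2) *
          (∑ e : Fin 5 → Fin 3, (∏ i, wt p (e i)) *
            |(1/2 : ℝ) * (eval3 (e 0) + eval3 (e 2) - eval3 (e 3)
                + eval3 (e 0) * eval3 (e 2) * eval3 (e 3))|)
        + p - p ^ 2 / 2 := by
  unfold Phi
  simp only [F_formula]
  rw [sum5, sum5]
  simp only [Fin.prod_univ_five, Matrix.cons_val_zero, Matrix.cons_val_one,
    Matrix.head_cons, Matrix.cons_val_two, Matrix.tail_cons, Matrix.cons_val_three,
    Matrix.cons_val_four, Function.comp]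
  have step : ∀ u v w : Fin 3,
      (∑ s : Fin 3, ∑ t : Fin 3,
          wt p u * wt p s * wt p v * wt p w * wt p t *
            |(eval3 t - eval3 s)/2 + (1 + eval3 s * eval3 t) *
              (eval3 u + eval3 v - eval3 w + eval3 u * eval3 v * eval3 w)/4|)
        = (wt p u * wt p v * wt p w) *
            (((1 - 2*p + 2*p^2) / 2) *
              |(1/2 : ℝ) * (eval3 u + eval3 v - eval3 w
                  + eval3 u * eval3 v * eval3 w)| + (p - p^2/2)) := by
    intro u v w
    rw [← phiInnerSum p _ (hA u v w), Finset.mul_sum]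
    refine Finset.sum_congr rfl fun s _ => ?_
    rw [Finset.mul_sum]
    refine Finset.sum_congr rfl fun t _ => ?_
    ring
  have step2 : ∀ u v w : Fin 3,
      (∑ s : Fin 3, ∑ t : Fin 3,
          wt p u * wt p s * wt p v * wt p w * wt p t *
            |(1/2 : ℝ) * (eval3 u + eval3 v - eval3 w
                + eval3 u * eval3 v * eval3 w)|)
        = (wt p u * wt p v * wt p w) *
            |(1/2 : ℝ) * (eval3 u + eval3 v - eval3 w
                + eval3 u * eval3 v * eval3 w)| := by
    intro u v w
    simp only [Fin.sum_univ_three, wt_zero, wt_one, wt_two]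
    ring
  simp only [step, step2]
  simp only [Fin.sum_univ_three, wt_zero, wt_one, wt_two]
  ring
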